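/- Let α, β be real numbers with αβ(2αβ−1)(α−1) ≠ 0, and define on 3×3 matrices F(x) = [(Σ_n Δ_n^1)^α + (Σ_n Δ_n^2)^α + (Σ_n Δ_n^3)^α]^β, where Δ_n^k are the cofactors of x. Then at any point where the relevant quantities are positive, the gradient matrix (Φ_k^i) = (∂Φ/∂Δ_i^k) has rank 1, and the cofactors D_k^n of y = F'(x) satisfy D_k^1 = D_k^2 = D_k^3 for k = 1, 2, 3; i.e., the image of F' lies in the set of matrices whose cofactor matrix has all three rows (in the appropriate indexing) equal. -/

import Mathlib

set_option maxHeartbeats 1000000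

attribute [local instance] Matrix.normedAddCommGroup Matrix.normedSpace

/-- The continuous linear map sending a `3×3` real matrix to its `(a,b)` entry. -/
noncomputable def entryCLM (a b : Fin 3) : Matrix (Fin 3) (Fin 3) ℝ →L[ℝ] ℝ :=
  LinearMap.toContinuousLinearMap
    { toFun := fun z => z a b
      map_add' := fun _ _ => rfl
      map_smul' := fun _ _ => rfl }

lemma entryCLM_std (a b n k : Fin 3) :
    entryCLM a b (Matrix.single n k (1:ℝ)) = if n = a ∧ k = b then 1 else 0 := rfl

@[simp] lemma entryCLM_apply (a b : Fin 3) (z : Matrix (Fin 3) (Fin 3) ℝ) :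
    entryCLM a b z = z a b := rfl

lemma hasFDerivAt_entry (a b : Fin 3) (x : Matrix (Fin 3) (Fin 3) ℝ) :
    HasFDerivAt (fun z : Matrix (Fin 3) (Fin 3) ℝ => z a b) (entryCLM a b) x :=
  (entryCLM a b).hasFDerivAt

/-- If all rows of a `3×3` matrix sum to `0`, then all columns of its adjugate are constant. -/
lemma adjugate_row_eq (y : Matrix (Fin 3) (Fin 3) ℝ)
    (h : ∀ k, y k 0 + y k 1 + y k 2 = 0) :
    ∀ k n n', y.adjugate n k = y.adjugate n' k := by
  have h2 : ∀ k, y k 2 = -y k 0 - y k 1 := fun k => by linarith [h k]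
  intro k n n'
  fin_cases k <;> fin_cases n <;> fin_cases n' <;>
    simp [Matrix.adjugate_fin_three, h2] <;> ring

/-- Row sums of the explicit `3×3` adjugate (rows `0`, `1`, `2`). -/
noncomputable def R0 (z : Matrix (Fin 3) (Fin 3) ℝ) : ℝ :=
  (z 1 1 * z 2 2 - z 1 2 * z 2 1) + (-(z 0 1 * z 2 2) + z 0 2 * z 2 1)
    + (z 0 1 * z 1 2 - z 0 2 * z 1 1)
noncomputable def R1 (z : Matrix (Fin 3) (Fin 3) ℝ) : ℝ :=
  (-(z 1 0 * z 2 2) + z 1 2 * z 2 0) + (z 0 0 * z 2 2 - z 0 2 * z 2 0)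
    + (-(z 0 0 * z 1 2) + z 0 2 * z 1 0)
noncomputable def R2 (z : Matrix (Fin 3) (Fin 3) ℝ) : ℝ :=
  (z 1 0 * z 2 1 - z 1 1 * z 2 0) + (-(z 0 0 * z 2 1) + z 0 1 * z 2 0)
    + (z 0 0 * z 1 1 - z 0 1 * z 1 0)

/-- For `F(x) = ((Σₙ Δₙ¹)^α + (Σₙ Δₙ²)^α + (Σₙ Δₙ³)^α)^β` on `3×3` matrices, where
`Δ n k` is the cofactor of `x n k`, at any point where the column sums of cofactors
are positive: the gradient matrix `G k i = ∂Φ/∂Δ i k` has rank 1 (all `2×2` minors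
vanish), and the cofactors `D k n = adjugate y n k` of `y = F'(x)` satisfy
`D k 1 = D k 2 = D k 3` for each `k`. -/
theorem gradient_rank_one_and_equal_cofactors (α β : ℝ)
    (h : α * β * (2 * α * β - 1) * (α - 1) ≠ 0)
    (x Δ : Matrix (Fin 3) (Fin 3) ℝ) (hΔ : ∀ n k, Δ n k = x.adjugate k n)
    (hpos : ∀ k, 0 < ∑ n, Δ n k)
    (Φ : Matrix (Fin 3) (Fin 3) ℝ → ℝ)
    (hΦ : ∀ M : Matrix (Fin 3) (Fin 3) ℝ,
      Φ M = ((∑ n, M n 0) ^ α + (∑ n, M n 1) ^ α + (∑ n, M n 2) ^ α) ^ β)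
    (G : Matrix (Fin 3) (Fin 3) ℝ)
    (hG : ∀ k i, G k i = fderiv ℝ Φ Δ (Matrix.single i k 1))
    (y : Matrix (Fin 3) (Fin 3) ℝ)
    (hy : ∀ k n, y k n =
      fderiv ℝ (fun z : Matrix (Fin 3) (Fin 3) ℝ => Φ (Matrix.of fun a b => z.adjugate b a))
        x (Matrix.single n k 1)) :
    (∀ i k i' k', G k i * G k' i' = G k' i * G k i') ∧
    (∀ k n n', y.adjugate n k = y.adjugate n' k) := by
  have hune : ∀ j, (∑ n, Δ n j) ≠ 0 := fun j => ne_of_gt (hpos j)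
  set S : ℝ := (∑ n, Δ n 0) ^ α + (∑ n, Δ n 1) ^ α + (∑ n, Δ n 2) ^ α with hS
  have hSpos : 0 < S := by
    have := Real.rpow_pos_of_pos (hpos 0) α
    have := Real.rpow_pos_of_pos (hpos 1) α
    have := Real.rpow_pos_of_pos (hpos 2) α
    positivity
  constructor
  · -- Part 1: the gradient matrix has rank one
    let P : Fin 3 → (Matrix (Fin 3) (Fin 3) ℝ →L[ℝ] ℝ) :=
      fun j => entryCLM 0 j + entryCLM 1 j + entryCLM 2 j
    have hPd : ∀ j, HasFDerivAt (fun M : Matrix (Fin 3) (Fin 3) ℝ => ∑ n, M n j) (P j) Δ := by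
      intro j
      have : (fun M : Matrix (Fin 3) (Fin 3) ℝ => ∑ n, M n j) = ⇑(P j) := by
        funext M
        simp [P, Fin.sum_univ_three]
      rw [this]
      exact (P j).hasFDerivAt
    have t : ∀ j, HasFDerivAt (fun M : Matrix (Fin 3) (Fin 3) ℝ => (∑ n, M n j) ^ α)
        ((α * (∑ n, Δ n j) ^ (α - 1)) • P j) Δ := fun j =>
      by exact ((Real.hasStrictDerivAt_rpow_const_of_ne (hune j) α).hasDerivAt).comp_hasFDerivAt Δ (hPd j)
    have inner : HasFDerivAt
        (fun M : Matrix (Fin 3) (Fin 3) ℝ =>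
          (∑ n, M n 0) ^ α + (∑ n, M n 1) ^ α + (∑ n, M n 2) ^ α)
        ((α * (∑ n, Δ n 0) ^ (α - 1)) • P 0 + (α * (∑ n, Δ n 1) ^ (α - 1)) • P 1
          + (α * (∑ n, Δ n 2) ^ (α - 1)) • P 2) Δ := ((t 0).add (t 1)).add (t 2)
    have hΦd : HasFDerivAt Φ ((β * S ^ (β - 1)) •
        ((α * (∑ n, Δ n 0) ^ (α - 1)) • P 0 + (α * (∑ n, Δ n 1) ^ (α - 1)) • P 1
          + (α * (∑ n, Δ n 2) ^ (α - 1)) • P 2)) Δ := by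
      have hfun : Φ = fun M : Matrix (Fin 3) (Fin 3) ℝ =>
          ((∑ n, M n 0) ^ α + (∑ n, M n 1) ^ α + (∑ n, M n 2) ^ α) ^ β := funext hΦ
      rw [hfun]
      exact ((Real.hasStrictDerivAt_rpow_const_of_ne (ne_of_gt hSpos) β).hasDerivAt).comp_hasFDerivAt
        Δ inner
    have hGc : ∀ k i, G k i = (β * S ^ (β - 1)) * (α * (∑ n, Δ n k) ^ (α - 1)) := by
      intro k i
      rw [hG, hΦd.fderiv]
      fin_cases k <;> fin_cases i <;>
        simp [P, Matrix.single, Fin.sum_univ_three]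
    intro i k i' k'
    rw [hGc, hGc, hGc, hGc]; ring
  · -- Part 2: rows of `y` sum to zero, hence the adjugate columns are constant
    have hr0 : R0 x = ∑ n, Δ n 0 := by
      simp only [Fin.sum_univ_three, hΔ, Matrix.adjugate_fin_three x, R0]
      simp
    have hr1 : R1 x = ∑ n, Δ n 1 := by
      simp only [Fin.sum_univ_three, hΔ, Matrix.adjugate_fin_three x, R1]
      simp
    have hr2 : R2 x = ∑ n, Δ n 2 := by
      simp only [Fin.sum_univ_three, hΔ, Matrix.adjugate_fin_three x, R2]
      simp
    have hFeq : (fun z : Matrix (Fin 3) (Fin 3) ℝ => Φ (Matrix.of fun a b => z.adjugate b a))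
        = fun z => ((R0 z) ^ α + (R1 z) ^ α + (R2 z) ^ α) ^ β := by
      funext z
      rw [hΦ]
      simp only [Matrix.of_apply, Fin.sum_univ_three, Matrix.adjugate_fin_three z, R0, R1, R2]
      simp
    have hm : ∀ a b c d : Fin 3, HasFDerivAt (fun z : Matrix (Fin 3) (Fin 3) ℝ => z a b * z c d)
        (x a b • entryCLM c d + x c d • entryCLM a b) x :=
      fun a b c d => (hasFDerivAt_entry a b x).mul (hasFDerivAt_entry c d x)
    set L0 : Matrix (Fin 3) (Fin 3) ℝ →L[ℝ] ℝ :=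
      x 1 1 • entryCLM 2 2 + x 2 2 • entryCLM 1 1 - (x 1 2 • entryCLM 2 1 + x 2 1 • entryCLM 1 2) +
        (-(x 0 1 • entryCLM 2 2 + x 2 2 • entryCLM 0 1) + (x 0 2 • entryCLM 2 1 + x 2 1 • entryCLM 0 2)) +
        (x 0 1 • entryCLM 1 2 + x 1 2 • entryCLM 0 1 - (x 0 2 • entryCLM 1 1 + x 1 1 • entryCLM 0 2))
      with hL0
    set L1 : Matrix (Fin 3) (Fin 3) ℝ →L[ℝ] ℝ :=
      -(x 1 0 • entryCLM 2 2 + x 2 2 • entryCLM 1 0) + (x 1 2 • entryCLM 2 0 + x 2 0 • entryCLM 1 2) +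
        (x 0 0 • entryCLM 2 2 + x 2 2 • entryCLM 0 0 - (x 0 2 • entryCLM 2 0 + x 2 0 • entryCLM 0 2)) +
        (-(x 0 0 • entryCLM 1 2 + x 1 2 • entryCLM 0 0) + (x 0 2 • entryCLM 1 0 + x 1 0 • entryCLM 0 2))
      with hL1
    set L2 : Matrix (Fin 3) (Fin 3) ℝ →L[ℝ] ℝ :=
      x 1 0 • entryCLM 2 1 + x 2 1 • entryCLM 1 0 - (x 1 1 • entryCLM 2 0 + x 2 0 • entryCLM 1 1) +
        (-(x 0 0 • entryCLM 2 1 + x 2 1 • entryCLM 0 0) + (x 0 1 • entryCLM 2 0 + x 2 0 • entryCLM 0 1)) +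
        (x 0 0 • entryCLM 1 1 + x 1 1 • entryCLM 0 0 - (x 0 1 • entryCLM 1 0 + x 1 0 • entryCLM 0 1))
      with hL2
    have hR0d : HasFDerivAt R0 L0 x :=
      (((hm 1 1 2 2).sub (hm 1 2 2 1)).add (((hm 0 1 2 2).neg).add (hm 0 2 2 1))).add
        ((hm 0 1 1 2).sub (hm 0 2 1 1))
    have hR1d : HasFDerivAt R1 L1 x :=
      ((((hm 1 0 2 2).neg).add (hm 1 2 2 0)).add ((hm 0 0 2 2).sub (hm 0 2 2 0))).add
        (((hm 0 0 1 2).neg).add (hm 0 2 1 0))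
    have hR2d : HasFDerivAt R2 L2 x :=
      (((hm 1 0 2 1).sub (hm 1 1 2 0)).add (((hm 0 0 2 1).neg).add (hm 0 1 2 0))).add
        ((hm 0 0 1 1).sub (hm 0 1 1 0))
    have t0 : HasFDerivAt (fun z => R0 z ^ α) ((α * (∑ n, Δ n 0) ^ (α - 1)) • L0) x :=
      ((Real.hasStrictDerivAt_rpow_const_of_ne (hune 0) α).hasDerivAt).comp_hasFDerivAt_of_eq
        x hR0d hr0.symm
    have t1 : HasFDerivAt (fun z => R1 z ^ α) ((α * (∑ n, Δ n 1) ^ (α - 1)) • L1) x :=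
      ((Real.hasStrictDerivAt_rpow_const_of_ne (hune 1) α).hasDerivAt).comp_hasFDerivAt_of_eq
        x hR1d hr1.symm
    have t2 : HasFDerivAt (fun z => R2 z ^ α) ((α * (∑ n, Δ n 2) ^ (α - 1)) • L2) x :=
      ((Real.hasStrictDerivAt_rpow_const_of_ne (hune 2) α).hasDerivAt).comp_hasFDerivAt_of_eq
        x hR2d hr2.symm
    have inner : HasFDerivAt (fun z => R0 z ^ α + R1 z ^ α + R2 z ^ α)
        ((α * (∑ n, Δ n 0) ^ (α - 1)) • L0 + (α * (∑ n, Δ n 1) ^ (α - 1)) • L1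
          + (α * (∑ n, Δ n 2) ^ (α - 1)) • L2) x := (t0.add t1).add t2
    have outer : HasFDerivAt (fun z => (R0 z ^ α + R1 z ^ α + R2 z ^ α) ^ β)
        ((β * S ^ (β - 1)) • ((α * (∑ n, Δ n 0) ^ (α - 1)) • L0
          + (α * (∑ n, Δ n 1) ^ (α - 1)) • L1 + (α * (∑ n, Δ n 2) ^ (α - 1)) • L2)) x :=
      ((Real.hasStrictDerivAt_rpow_const_of_ne (ne_of_gt hSpos) β).hasDerivAt).comp_hasFDerivAt_of_eq
        x inner (by rw [hS, hr0, hr1, hr2])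
    have hFd : HasFDerivAt
        (fun z : Matrix (Fin 3) (Fin 3) ℝ => Φ (Matrix.of fun a b => z.adjugate b a))
        ((β * S ^ (β - 1)) • ((α * (∑ n, Δ n 0) ^ (α - 1)) • L0
          + (α * (∑ n, Δ n 1) ^ (α - 1)) • L1 + (α * (∑ n, Δ n 2) ^ (α - 1)) • L2)) x := by
      rw [hFeq]; exact outer
    have hrow : ∀ k, y k 0 + y k 1 + y k 2 = 0 := by
      intro k
      have e0 := hy k 0
      have e1 := hy k 1
      have e2 := hy k 2
      rw [hFd.fderiv] at e0 e1 e2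
      rw [e0, e1, e2]
      simp only [ContinuousLinearMap.smul_apply, ContinuousLinearMap.add_apply,
        ContinuousLinearMap.sub_apply, ContinuousLinearMap.neg_apply, hL0, hL1, hL2,
        entryCLM_std, smul_eq_mul]
      fin_cases k <;> simp <;> ring
    exact adjugate_row_eq y hrow
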